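/- Mackey's formula for finite groups: let G be a finite group, H and K subgroups, R a ring, and M a right R[H]-module. Then there is an isomorphism of right R[K]-modules Res^G_K Ind^G_H M ≅ ⊕_{g} Ind^K_{K ∩ g⁻¹Hg} Res^{g⁻¹Hg}_{K ∩ g⁻¹Hg} (M·g), where g ranges over a set of representatives of the double cosets H\G/K, and M·g denotes M viewed as a right R[g⁻¹Hg]-module via conjugation by g. -/
import Mathlib


/- Statement 15: Mackey's formula for a finite group `G` with subgroups
`H, K`, a ring `R` and a right `R[H]`-module `M`:
`Res^G_K Ind^G_H M ≅ ⊕_{g ∈ H\G/K} Ind^K_{K ∩ g⁻¹Hg} Res (M·g)` as right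
`R[K]`-modules.

Encodings used (Mathlib has no balanced tensor product over the
noncommutative ring `R[H]`):
* A right `R[H]`-module is an additive group `M` with a right `R`-action
  (a `Rᵐᵒᵖ`-module structure) and a commuting right `H`-action (a
  `(↥H)ᵐᵒᵖ`-distributive action).
* `Ind^G_H M = M ⊗_{R[H]} R[G]` is realised by its standard concrete model
  for finite groups: `{f : G → M | f (x·h) = f x · h}`, with `G` acting on
  the right by `(f·g)(x) = f (g·x)` and `R` acting pointwise on the right.
* Similarly `Ind^K_{L_g} (M·g)` (where `L_g = K ∩ g⁻¹Hg` and `M·g` is `M`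
  with `L_g` acting through conjugation `l ↦ g l g⁻¹ ∈ H`) is realised as
  `{f : K → M | f (x·l) = f x · (g l g⁻¹)}`.
* The direct sum over `H\G/K` is the product over a set `D` of double coset
  representatives (a finite index set, so product = direct sum).
* An isomorphism of right `R[K]`-modules is an `Rᵐᵒᵖ`-linear equivalence
  commuting with the right `K`-actions. -/

variable (R : Type*) [Ring R] (G : Type*) [Group G]

/-- The subgroup `K ∩ g⁻¹Hg`. -/
def interConj (H K : Subgroup G) (g : G) : Subgroup G :=
  K ⊓ Subgroup.map (MulAut.conj g⁻¹).toMonoidHom H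

/-- For `l ∈ K ∩ g⁻¹Hg`, the element `g·l·g⁻¹` of `H`. -/
def conjElem (H K : Subgroup G) (g : G) (l : interConj G H K g) : H :=
  ⟨g * (l : G) * g⁻¹, by
    obtain ⟨h, hH, hh⟩ := Subgroup.mem_map.mp ((Subgroup.mem_inf.mp l.2).2)
    have hl : (l : G) = g⁻¹ * h * g⁻¹⁻¹ := by
      rw [← hh]; rfl
    have : g * (l : G) * g⁻¹ = h := by rw [hl]; group
    rw [this]; exact hH⟩

/-- The concrete model of the induced module `Ind^G_H M = M ⊗_{R[H]} R[G]`
for a finite group: `{f : G → M | f (x·h) = f x · h}`, as an `Rᵐᵒᵖ`-submodule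
of `G → M`. -/
def IndGH (H : Subgroup G) (M : Type*) [AddCommGroup M] [Module Rᵐᵒᵖ M]
    [DistribMulAction (↥H)ᵐᵒᵖ M] [SMulCommClass (↥H)ᵐᵒᵖ Rᵐᵒᵖ M] :
    Submodule Rᵐᵒᵖ (G → M) where
  carrier := {f | ∀ (x : G) (h : H), f (x * (h : G)) = MulOpposite.op h • f x}
  add_mem' := by
    intro a b ha hb x h
    simp only [Pi.add_apply, ha x h, hb x h, smul_add]
  zero_mem' := by intro x h; simp
  smul_mem' := by
    intro r f hf x h
    simp only [Pi.smul_apply, hf x h]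
    exact (smul_comm (MulOpposite.op h) r (f x)).symm

/-- The concrete model of `Ind^K_{L_g} (Res (M·g))`, where `L_g = K ∩ g⁻¹Hg`
acts on `M` through the conjugation `l ↦ g·l·g⁻¹ ∈ H`:
`{f : K → M | f (x·l) = f x · (g l g⁻¹)}`, as an `Rᵐᵒᵖ`-submodule of
`K → M`. -/
def IndKL (H K : Subgroup G) (g : G) (M : Type*) [AddCommGroup M]
    [Module Rᵐᵒᵖ M] [DistribMulAction (↥H)ᵐᵒᵖ M]
    [SMulCommClass (↥H)ᵐᵒᵖ Rᵐᵒᵖ M] :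
    Submodule Rᵐᵒᵖ (K → M) where
  carrier := {f | ∀ (x : K) (l : interConj G H K g),
    f (x * ⟨(l : G), (Subgroup.mem_inf.mp l.2).1⟩) =
      MulOpposite.op (conjElem G H K g l) • f x}
  add_mem' := by
    intro a b ha hb x l
    simp only [Pi.add_apply, ha x l, hb x l, smul_add]
  zero_mem' := by intro x l; simp
  smul_mem' := by
    intro r f hf x l
    simp only [Pi.smul_apply, hf x l]
    exact (smul_comm (MulOpposite.op (conjElem G H K g l)) r (f x)).symm

/-- The right action of `k ∈ K` on the model of `Res^G_K Ind^G_H M`: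
`(f·k)(x) = f (k·x)`. -/
def resIndSMul (H K : Subgroup G) (M : Type*) [AddCommGroup M]
    [Module Rᵐᵒᵖ M] [DistribMulAction (↥H)ᵐᵒᵖ M]
    [SMulCommClass (↥H)ᵐᵒᵖ Rᵐᵒᵖ M] (k : K) (f : IndGH R G H M) :
    IndGH R G H M :=
  ⟨fun x => (f : G → M) ((k : G) * x), by
    intro x h
    have := f.2 ((k : G) * x) h
    simpa [mul_assoc] using this⟩

/-- The right action of `k ∈ K` on the model of `Ind^K_{L_g} (M·g)`:
`(f·k)(x) = f (k·x)`. -/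
def indKSMul (H K : Subgroup G) (g : G) (M : Type*) [AddCommGroup M]
    [Module Rᵐᵒᵖ M] [DistribMulAction (↥H)ᵐᵒᵖ M]
    [SMulCommClass (↥H)ᵐᵒᵖ Rᵐᵒᵖ M] (k : K) (f : IndKL R G H K g M) :
    IndKL R G H K g M :=
  ⟨fun x => (f : K → M) (k * x), by
    intro x l
    have := f.2 (k * x) l
    simpa [mul_assoc] using this⟩

/-- Mackey's formula for finite groups: for subgroups `H, K` of a finite
group `G` and a right `R[H]`-module `M`,
`Res^G_K Ind^G_H M ≅ ⊕_{g ∈ H\G/K} Ind^K_{K ∩ g⁻¹Hg} Res^{g⁻¹Hg}_{K ∩ g⁻¹Hg} (M·g)`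
as right `R[K]`-modules, the sum being over a set `D` of representatives of
the double cosets `H\G/K`. -/
theorem mackey_formula_finite
    (R : Type*) [Ring R] (G : Type*) [Group G] [Fintype G]
    (H K : Subgroup G)
    (M : Type*) [AddCommGroup M] [Module Rᵐᵒᵖ M]
    [DistribMulAction (↥H)ᵐᵒᵖ M] [SMulCommClass (↥H)ᵐᵒᵖ Rᵐᵒᵖ M]
    (D : Finset G)
    (hD : ∀ x : G, ∃! d, d ∈ D ∧ ∃ h ∈ H, ∃ k ∈ K, x = h * d * k) :
    ∃ e : IndGH R G H M ≃ₗ[Rᵐᵒᵖ] (∀ d : D, IndKL R G H K (d : G) M),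
      ∀ (f : IndGH R G H M) (k : K),
        e (resIndSMul R G H K M k f) =
          fun d : D => indKSMul R G H K (d : G) M k (e f d) := by
    classical
  have hmem : ∀ x : G, (hD x).choose ∈ D := fun x => (hD x).choose_spec.1.1
  have hdecomp : ∀ x : G, ∃ h ∈ H, ∃ k ∈ K, x = h * (hD x).choose * k :=
    fun x => (hD x).choose_spec.1.2
  have huniq : ∀ (x d' : G), d' ∈ D → (∃ h ∈ H, ∃ k ∈ K, x = h * d' * k) →
      d' = (hD x).choose := fun x d' h1 h2 => (hD x).choose_spec.2 d' ⟨h1, h2⟩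
  choose hh hhH kk kkK hEq using hdecomp
  -- membership for the forward map
  have eMem : ∀ (f : IndGH R G H M) (d : D),
      (fun x : K => (f : G → M) ((x : G) * (d : G)⁻¹)) ∈ IndKL R G H K (d : G) M := by
    intro f d x l
    have h2 := f.2 ((x : G) * (d : G)⁻¹) (conjElem G H K (d : G) l)
    have harg : ((x : G) * (d : G)⁻¹) * ((conjElem G H K (d : G) l : H) : G) =
        ((x * ⟨(l : G), (Subgroup.mem_inf.mp l.2).1⟩ : K) : G) * (d : G)⁻¹ := by
      show ((x : G) * (d : G)⁻¹) * ((d : G) * (l : G) * (d : G)⁻¹) =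
        ((x : G) * (l : G)) * (d : G)⁻¹
      group
    rw [harg] at h2
    exact h2
  -- two decompositions with the same double-coset representative give the
  -- same value
  have key2 : ∀ (d' : G) (N : IndKL R G H K d' M) (h1 k1 h2 k2 : G)
      (hh1 : h1 ∈ H) (hk1 : k1 ∈ K) (hh2 : h2 ∈ H) (hk2 : k2 ∈ K),
      h1 * d' * k1 = h2 * d' * k2 →
      MulOpposite.op ((⟨h1, hh1⟩ : H))⁻¹ • (N : K → M) (⟨k1, hk1⟩ : K)⁻¹ =
        MulOpposite.op ((⟨h2, hh2⟩ : H))⁻¹ • (N : K → M) (⟨k2, hk2⟩ : K)⁻¹ := by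
    intro d' N h1 k1 h2 k2 hh1 hk1 hh2 hk2 h0
    have hconj : d' * (k2 * k1⁻¹) * d'⁻¹ = h2⁻¹ * h1 := by
      have he : k2 = d'⁻¹ * h2⁻¹ * (h1 * d' * k1) := by rw [h0]; group
      rw [he]; group
    have hlK : k2 * k1⁻¹ ∈ K := mul_mem hk2 (inv_mem hk1)
    have hlH : k2 * k1⁻¹ ∈ Subgroup.map (MulAut.conj d'⁻¹).toMonoidHom H := by
      refine Subgroup.mem_map.mpr ⟨h2⁻¹ * h1, mul_mem (inv_mem hh2) hh1, ?_⟩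
      show d'⁻¹ * (h2⁻¹ * h1) * d'⁻¹⁻¹ = k2 * k1⁻¹
      rw [← hconj]; group
    set l : interConj G H K d' := ⟨k2 * k1⁻¹, Subgroup.mem_inf.mpr ⟨hlK, hlH⟩⟩ with hl
    have hx : ((⟨k2, hk2⟩ : K)⁻¹ *
        (⟨(l : G), (Subgroup.mem_inf.mp l.2).1⟩ : K)) = (⟨k1, hk1⟩ : K)⁻¹ := by
      apply Subtype.ext
      show k2⁻¹ * (k2 * k1⁻¹) = k1⁻¹
      group
    have hF := N.2 (⟨k2, hk2⟩ : K)⁻¹ l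
    rw [hx] at hF
    rw [hF, smul_smul, ← MulOpposite.op_mul]
    congr 2
    apply Subtype.ext
    show (d' * (k2 * k1⁻¹) * d'⁻¹) * h1⁻¹ = h2⁻¹
    rw [hconj]; group
  -- the inverse map
  set iAux : (∀ d : D, IndKL R G H K (d : G) M) → G → M := fun F y =>
    MulOpposite.op ((⟨hh y⁻¹, hhH y⁻¹⟩ : H))⁻¹ •
      (F ⟨(hD y⁻¹).choose, hmem y⁻¹⟩ : K → M) (⟨kk y⁻¹, kkK y⁻¹⟩ : K)⁻¹ with hiAux
  have keyEval : ∀ (F : ∀ d : D, IndKL R G H K (d : G) M) (y d' h' k' : G)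
      (hd' : d' ∈ D) (hh' : h' ∈ H) (hk' : k' ∈ K), y⁻¹ = h' * d' * k' →
      iAux F y = MulOpposite.op ((⟨h', hh'⟩ : H))⁻¹ •
        (F ⟨d', hd'⟩ : K → M) (⟨k', hk'⟩ : K)⁻¹ := by
    intro F y d' h' k' hd' hh' hk' hy
    have hde : d' = (hD y⁻¹).choose := huniq y⁻¹ d' hd' ⟨h', hh', k', hk', hy⟩
    subst hde
    exact key2 ((hD y⁻¹).choose) (F ⟨(hD y⁻¹).choose, hmem y⁻¹⟩) (hh y⁻¹) (kk y⁻¹) h' k'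
      (hhH y⁻¹) (kkK y⁻¹) hh' hk' ((hEq y⁻¹).symm.trans hy)
  have iMem : ∀ F : ∀ d : D, IndKL R G H K (d : G) M, iAux F ∈ IndGH R G H M := by
    intro F y h₀
    have hy' : (y * (h₀ : G))⁻¹ = ((h₀ : G)⁻¹ * hh y⁻¹) * (hD y⁻¹).choose * kk y⁻¹ := by
      have h1 := hEq y⁻¹
      have h2 : (y * (h₀ : G))⁻¹ = (h₀ : G)⁻¹ * y⁻¹ := by group
      rw [h2]
      conv_lhs => rw [h1]
      group
    rw [keyEval F (y * (h₀ : G)) ((hD y⁻¹).choose) ((h₀ : G)⁻¹ * hh y⁻¹) (kk y⁻¹)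
      (hmem y⁻¹) (mul_mem (inv_mem h₀.2) (hhH y⁻¹)) (kkK y⁻¹) hy']
    show _ = MulOpposite.op h₀ • (MulOpposite.op ((⟨hh y⁻¹, hhH y⁻¹⟩ : H))⁻¹ •
      (F ⟨(hD y⁻¹).choose, hmem y⁻¹⟩ : K → M) (⟨kk y⁻¹, kkK y⁻¹⟩ : K)⁻¹)
    rw [smul_smul, ← MulOpposite.op_mul]
    congr 2
    apply Subtype.ext
    show ((h₀ : G)⁻¹ * hh y⁻¹)⁻¹ = (hh y⁻¹)⁻¹ * (h₀ : G)
    group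
  refine ⟨{ toFun := fun f d => ⟨fun x => (f : G → M) ((x : G) * (d : G)⁻¹), eMem f d⟩
          , invFun := fun F => ⟨iAux F, iMem F⟩
          , map_add' := ?_, map_smul' := ?_
          , left_inv := ?_, right_inv := ?_ }, ?_⟩
  · intro f g; rfl
  · intro r f; rfl
  · intro f
    apply Subtype.ext
    funext y
    have h2 := f.2 ((kk y⁻¹)⁻¹ * ((hD y⁻¹).choose)⁻¹) (⟨hh y⁻¹, hhH y⁻¹⟩ : H)⁻¹
    have hy2 : (kk y⁻¹)⁻¹ * ((hD y⁻¹).choose)⁻¹ * (hh y⁻¹)⁻¹ = y := by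
      have h3 := congrArg Inv.inv (hEq y⁻¹)
      rw [inv_inv, mul_inv_rev, mul_inv_rev] at h3
      rw [mul_assoc]; exact h3.symm
    show MulOpposite.op ((⟨hh y⁻¹, hhH y⁻¹⟩ : H))⁻¹ •
      (f : G → M) ((kk y⁻¹)⁻¹ * ((hD y⁻¹).choose)⁻¹) = (f : G → M) y
    conv_rhs => rw [← hy2]
    exact h2.symm
  · intro F
    funext d
    apply Subtype.ext
    funext x
    have hy : ((x : G) * (d : G)⁻¹)⁻¹ = 1 * (d : G) * (x : G)⁻¹ := by group
    have h1 := keyEval F ((x : G) * (d : G)⁻¹) (d : G) 1 ((x : G)⁻¹) d.2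
      (one_mem H) (inv_mem x.2) hy
    have e2 : ((⟨(x : G)⁻¹, inv_mem x.2⟩ : K))⁻¹ = x := by
      apply Subtype.ext; show ((x : G)⁻¹)⁻¹ = (x : G); group
    show iAux F ((x : G) * (d : G)⁻¹) = (F d : K → M) x
    rw [h1, e2]
    show MulOpposite.op ((⟨(1 : G), one_mem H⟩ : H))⁻¹ • (F d : K → M) x
      = (F d : K → M) x
    rw [show ((⟨(1 : G), one_mem H⟩ : H)) = 1 from rfl, inv_one,
      MulOpposite.op_one, one_smul]
  · intro f k
    funext d
    apply Subtype.ext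
    funext x
    show (f : G → M) ((k : G) * ((x : G) * (d : G)⁻¹)) =
      (f : G → M) (((k : G) * (x : G)) * (d : G)⁻¹)
    rw [mul_assoc]
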